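/- The function h(η) = (f(η) + η)(2 f(η) + η), with f(η) = (1/√π) · exp(−η²)/(1 + erf(η)), is strictly increasing on [0, ∞); in particular h(η) > 1/2 for all η ≥ 0. -/

import Mathlib

open Real

noncomputable def erf (z : ℝ) : ℝ := (2 / Real.sqrt π) * ∫ s in (0:ℝ)..z, Real.exp (-s^2)

noncomputable def f (η : ℝ) : ℝ := (1 / Real.sqrt π) * Real.exp (-η^2) / (1 + erf η)

noncomputable def g (η : ℝ) : ℝ := 1 - 2 * f η * (f η + η)

noncomputable def hfun (η : ℝ) : ℝ := (f η + η) * (2 * f η + η)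

lemma auxCont : Continuous fun s : ℝ => Real.exp (-s^2) := by continuity

lemma auxII (a b : ℝ) : IntervalIntegrable (fun s : ℝ => Real.exp (-s^2)) MeasureTheory.volume a b :=
  auxCont.intervalIntegrable a b

lemma I_nonneg {η : ℝ} (hη : 0 ≤ η) : 0 ≤ ∫ s in (0:ℝ)..η, Real.exp (-s^2) :=
  intervalIntegral.integral_nonneg hη (fun x _ => (Real.exp_pos _).le)

lemma I_le {η : ℝ} (hη : 0 ≤ η) : (∫ s in (0:ℝ)..η, Real.exp (-s^2)) ≤ η := by
  have h := intervalIntegral.integral_mono_on (μ := MeasureTheory.volume)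
    (f := fun s : ℝ => Real.exp (-s^2)) (g := fun _ : ℝ => (1:ℝ)) hη (auxII 0 η)
    (intervalIntegrable_const) (fun x _ => by
      rw [Real.exp_le_one_iff]; nlinarith [sq_nonneg x])
  simpa using h

lemma I_ge {η : ℝ} (hη : 0 ≤ η) : η - η^3/3 ≤ ∫ s in (0:ℝ)..η, Real.exp (-s^2) := by
  have h := intervalIntegral.integral_mono_on (μ := MeasureTheory.volume)
    (g := fun s : ℝ => Real.exp (-s^2)) (f := fun s : ℝ => 1 - s^2) hη
    (by apply Continuous.intervalIntegrable; continuity) (auxII 0 η)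
    (fun x _ => by nlinarith [Real.add_one_le_exp (-x^2)])
  have h2 : (∫ s in (0:ℝ)..η, (1 - s^2)) = η - η^3/3 := by
    rw [intervalIntegral.integral_sub intervalIntegrable_const
      (by apply Continuous.intervalIntegrable; continuity)]
    simp [integral_pow]
    ring
  linarith [h, h2.ge, h2.le]

lemma I_ge_one {η : ℝ} (hη : 1 ≤ η) : 2/3 ≤ ∫ s in (0:ℝ)..η, Real.exp (-s^2) := by
  have hsplit : (∫ s in (0:ℝ)..1, Real.exp (-s^2)) + (∫ s in (1:ℝ)..η, Real.exp (-s^2))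
      = ∫ s in (0:ℝ)..η, Real.exp (-s^2) :=
    intervalIntegral.integral_add_adjacent_intervals (auxII 0 1) (auxII 1 η)
  have h1 : (2:ℝ)/3 ≤ ∫ s in (0:ℝ)..1, Real.exp (-s^2) := by
    have := I_ge (η := 1) (by norm_num); linarith
  have h2 : 0 ≤ ∫ s in (1:ℝ)..η, Real.exp (-s^2) :=
    intervalIntegral.integral_nonneg hη (fun x _ => (Real.exp_pos _).le)
  linarith

lemma f_eq (η : ℝ) : f η = Real.exp (-η^2) / (Real.sqrt π + 2 * ∫ s in (0:ℝ)..η, Real.exp (-s^2)) := by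
  have hc : (0:ℝ) < Real.sqrt π := Real.sqrt_pos.mpr Real.pi_pos
  unfold f erf
  rw [show (1 + 2 / Real.sqrt π * ∫ s in (0:ℝ)..η, Real.exp (-s^2))
      = (Real.sqrt π + 2 * ∫ s in (0:ℝ)..η, Real.exp (-s^2)) / Real.sqrt π by field_simp]
  rw [div_div_eq_mul_div]
  congr 1
  field_simp

lemma f_pos {η : ℝ} (hη : 0 ≤ η) : 0 < f η := by
  rw [f_eq]
  have hc : (0:ℝ) < Real.sqrt π := Real.sqrt_pos.mpr Real.pi_pos
  exact div_pos (Real.exp_pos _) (by linarith [I_nonneg hη])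

lemma erf_nonneg {η : ℝ} (hη : 0 ≤ η) : 0 ≤ erf η := by
  have hc : (0:ℝ) < Real.sqrt π := Real.sqrt_pos.mpr Real.pi_pos
  unfold erf
  have := I_nonneg hη
  positivity

lemma hasDerivAt_erf (x : ℝ) : HasDerivAt erf (2 / Real.sqrt π * Real.exp (-x^2)) x := by
  have h1 : HasDerivAt (fun u : ℝ => ∫ s in (0:ℝ)..u, Real.exp (-s^2)) (Real.exp (-x^2)) x :=
    intervalIntegral.integral_hasDerivAt_right (auxII 0 x)
      (auxCont.stronglyMeasurable.stronglyMeasurableAtFilter) auxCont.continuousAt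
  exact h1.const_mul _

lemma hasDerivAt_f {x : ℝ} (hx : 0 ≤ x) : HasDerivAt f (-2 * f x * (f x + x)) x := by
  have hc : (0:ℝ) < Real.sqrt π := Real.sqrt_pos.mpr Real.pi_pos
  have hD : (1 + erf x) ≠ 0 := by linarith [erf_nonneg hx]
  have hnum : HasDerivAt (fun u : ℝ => 1 / Real.sqrt π * Real.exp (-u^2))
      (1 / Real.sqrt π * (Real.exp (-x^2) * (-(2*x)))) x := by
    have hp : HasDerivAt (fun u : ℝ => -u^2) (-(2*x)) x := by
      simpa [Pi.neg_def] using (((hasDerivAt_pow 2 x)).neg)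
    exact (hp.exp).const_mul _
  have hden : HasDerivAt (fun u : ℝ => 1 + erf u) (2 / Real.sqrt π * Real.exp (-x^2)) x :=
    (hasDerivAt_erf x).const_add 1
  have h := hnum.div hden hD
  refine h.congr_deriv ?_
  unfold f
  have hs : Real.sqrt π ^ 2 = π := Real.sq_sqrt Real.pi_pos.le
  field_simp
  ring


private lemma case1_core (e c E u : ℝ) (h0 : 0 ≤ e) (h1 : e ≤ 1) (hc : 1.772 < c) (hc2 : c < 1.773)
    (hs : c^2 = π) (hp1 : 3.1415 < π) (hp2 : π < 3.1416)
    (hE0 : 0 < E) (hE2 : E*(1+e^2) ≤ 1) (hu : u = c+2*e-2*e^3/3) :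
    3*E*E + 3*E*e*u < u*u := by
  have ha : 0 ≤ e^5*(1-e^2) := mul_nonneg (pow_nonneg h0 5) (by nlinarith)
  have hb : 0 ≤ e^4*(1-e^4) := mul_nonneg (pow_nonneg h0 4) (by nlinarith [pow_le_one₀ h0 h1 (n:=4)])
  have hcc : (0:ℝ) < c := by linarith
  have poly : u^2*(1+e^2)^2 - 3*e*u*(1+e^2) - 3 > 0 := by
    subst hu
    nlinarith [mul_nonneg hcc.le ha, hb, pow_nonneg h0 10, mul_nonneg hcc.le h0,
      mul_nonneg (mul_nonneg h0 h0) (sq_nonneg c), sq_nonneg e, pow_nonneg h0 3,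
      mul_nonneg hcc.le (pow_nonneg h0 3), mul_nonneg hcc.le (pow_nonneg h0 5),
      pow_nonneg h0 6, mul_nonneg (sq_nonneg e) (sq_nonneg c), pow_nonneg h0 4]
  have hu0 : 0 < u := by subst hu; nlinarith [mul_nonneg h0 (by nlinarith : (0:ℝ) ≤ 3 - e^2)]
  have h4 : E^2*(1+e^2)^2 ≤ 1 := by
    nlinarith [hE2, mul_nonneg hE0.le (by positivity : (0:ℝ) ≤ 1+e^2)]
  have h5 : 3*E*e*u*(1+e^2)^2 ≤ 3*e*u*(1+e^2) := by
    nlinarith [mul_nonneg (mul_nonneg h0 hu0.le) (by positivity : (0:ℝ) ≤ 1+e^2), hE2, hE0, sq_nonneg e]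
  nlinarith [poly, h4, h5, sq_nonneg (1+e^2)]

set_option maxHeartbeats 1000000 in
private lemma case2_core (e c E t : ℝ) (h1 : 1 ≤ e) (hc : 1.772 < c) (hc2 : c < 1.773)
    (hE0 : 0 < E) (hED : E*(1+e^2+e^4/2) ≤ 1) (ht1 : c+4/3 ≤ t) (ht2 : t ≤ c+2*e) :
    3*E*E + 3*E*e*t < t*t := by
  have h0 : (0:ℝ) ≤ e := by linarith
  have hDpos : (0:ℝ) ≤ 1+e^2+e^4/2 := by positivity
  have hD : (5:ℝ)/2 ≤ 1+e^2+e^4/2 := by nlinarith [one_le_pow₀ h1 (n:=4), one_le_pow₀ h1 (n:=2)]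
  have hE25 : E ≤ 2/5 := by nlinarith [hED, mul_le_mul_of_nonneg_left hD hE0.le]
  have ht0 : 0 < t := by linarith
  have hA : 3*E*E*(1+e^2+e^4/2) ≤ 6/5 := by nlinarith [hED, hE25, hE0]
  have hk1 : 3*E*e*t ≤ 3*E*e*(c+2*e) := by nlinarith [mul_nonneg hE0.le h0]
  have hB : 3*E*e*t*(1+e^2+e^4/2) ≤ 3*e*(c+2*e) := by
    have hk2 : 3*E*e*(c+2*e)*(1+e^2+e^4/2) ≤ 3*e*(c+2*e) := by
      nlinarith [mul_nonneg (mul_nonneg h0 (by linarith : (0:ℝ) ≤ c+2*e)) hE0.le, hED]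
    nlinarith [hk1, hDpos, mul_nonneg hE0.le h0]
  have hv : (9.6:ℝ) ≤ (c+4/3)^2 := by nlinarith
  have ht2' : (9.6:ℝ) ≤ t*t := by nlinarith
  have hC : (9.6:ℝ)*(1+e^2) ≤ t*t*(1+e^2+e^4/2) := by
    exact mul_le_mul ht2' (by linarith [pow_nonneg h0 4] : (1:ℝ)+e^2 ≤ 1+e^2+e^4/2)
      (by positivity) (by linarith)
  nlinarith [hA, hB, hC, hDpos, sq_nonneg (e-1), sq_nonneg e,
    mul_nonneg h0 (by linarith : (0:ℝ) ≤ 1.773 - c)]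

set_option maxHeartbeats 1000000 in
private lemma hgt_core (e c E t : ℝ) (h0 : 0 ≤ e) (h34 : e ≤ 3/4) (hc : 1.772 < c) (hc2 : c < 1.773)
    (hE0 : 0 < E) (hEl : 1-e^2 ≤ E) (ht1 : c ≤ t) (ht2 : t ≤ c+2*e) :
    t*t/2 < (E+e*t)*(2*E+e*t) := by
  nlinarith [mul_nonneg h0 (by linarith : (0:ℝ) ≤ t), mul_pos hE0 hE0, sq_nonneg (e*t),
    mul_nonneg (mul_nonneg h0 h0) (sq_nonneg t), mul_nonneg (sub_nonneg.mpr ht1) (sub_nonneg.mpr ht2),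
    mul_nonneg (mul_nonneg hE0.le h0) (by linarith : (0:ℝ) ≤ t),
    sq_nonneg (t - c), sq_nonneg (c+2*e-t), mul_pos hE0 (by nlinarith : (0:ℝ) < t),
    mul_nonneg (sub_nonneg.mpr hEl) (by linarith : (0:ℝ) ≤ t), sq_nonneg e, sq_nonneg (e-3/4)]

lemma sqrt_pi_bounds : 1.772 < Real.sqrt π ∧ Real.sqrt π < 1.773 := by
  have h1 : (3.1415:ℝ) < π := by linarith [Real.pi_gt_d6]
  have h2 : π < 3.1416 := by linarith [Real.pi_lt_d6]
  have hc : (0:ℝ) < Real.sqrt π := Real.sqrt_pos.mpr Real.pi_pos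
  have hs : Real.sqrt π ^ 2 = π := Real.sq_sqrt Real.pi_pos.le
  constructor <;> nlinarith

set_option maxHeartbeats 1600000 in
lemma key_bound {η : ℝ} (hη : 0 ≤ η) : f η * (f η + η) < 1/3 := by
  have hc : (0:ℝ) < Real.sqrt π := Real.sqrt_pos.mpr Real.pi_pos
  have hs : Real.sqrt π ^ 2 = π := Real.sq_sqrt Real.pi_pos.le
  have h1 : (3.1415:ℝ) < π := by linarith [Real.pi_gt_d6]
  have h2 : π < 3.1416 := by linarith [Real.pi_lt_d6]
  obtain ⟨hcl, hcu⟩ := sqrt_pi_bounds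
  rw [f_eq]
  set c := Real.sqrt π with hcdef
  set I := ∫ s in (0:ℝ)..η, Real.exp (-s^2) with hIdef
  set E := Real.exp (-η^2) with hEdef
  have hI0 : 0 ≤ I := I_nonneg hη
  have hIu : I ≤ η := I_le hη
  have hIl : η - η^3/3 ≤ I := I_ge hη
  have hE0 : 0 < E := Real.exp_pos _
  have hEu : E * (1 + η^2 + η^4/2) ≤ 1 := by
    have hq := Real.quadratic_le_exp_of_nonneg (x := η^2) (by positivity)
    have hinv : E * Real.exp (η^2) = 1 := by
      rw [hEdef, ← Real.exp_add]; norm_num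
    nlinarith [hE0]
  set t := c + 2*I with htdef
  have ht : 0 < t := by rw [htdef]; linarith
  clear_value c I E t
  have key : 3*(E*E + E*η*t) < t^2 := by
    rcases le_or_gt η 1 with h|h
    · -- case η ≤ 1
      have hE2 : E*(1+η^2) ≤ 1 := by nlinarith [hE0, pow_nonneg hη 4]
      have step2 := case1_core η c E (c+2*η-2*η^3/3) hη h hcl hcu hs h1 h2 hE0 hE2 rfl
      have htu : c + 2*η - 2*η^3/3 ≤ t := by rw [htdef]; linarith
      have h3Eη : 3*E*η ≤ 3/2 := by
        nlinarith [mul_nonneg hη hE0.le, hE2, sq_nonneg (η-1), sq_nonneg η]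
      have hu0 : (0:ℝ) < c + 2*η - 2*η^3/3 := by
        nlinarith [mul_nonneg hη (by nlinarith : (0:ℝ) ≤ 3 - η^2)]
      have hstep1 : (c+2*η-2*η^3/3)*((c+2*η-2*η^3/3) - 3*E*η) ≤ t*(t - 3*E*η) := by
        nlinarith [mul_nonneg (sub_nonneg.mpr htu)
          (by nlinarith : (0:ℝ) ≤ t + (c+2*η-2*η^3/3) - 3*E*η)]
      nlinarith [step2, hstep1]
    · -- case η > 1
      have hI23 : 2/3 ≤ I := by rw [hIdef]; exact I_ge_one h.le
      have ht1 : c + 4/3 ≤ t := by rw [htdef]; linarith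
      have ht2 : t ≤ c + 2*η := by rw [htdef]; linarith
      have := case2_core η c E t h.le hcl hcu hE0 hEu ht1 ht2
      nlinarith [this]
  have heq : E/t * (E/t + η) = (E*E + E*η*t)/t^2 := by field_simp
  rw [heq, div_lt_iff₀ (by positivity)]
  nlinarith [key]

lemma hfun_gt {η : ℝ} (hη : 0 ≤ η) : 1/2 < hfun η := by
  have hc : (0:ℝ) < Real.sqrt π := Real.sqrt_pos.mpr Real.pi_pos
  obtain ⟨hcl, hcu⟩ := sqrt_pi_bounds
  unfold hfun
  rcases le_or_gt (3/4 : ℝ) η with h|h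
  · have hf := f_pos hη
    nlinarith [mul_pos hf hf, mul_nonneg hf.le hη]
  · rw [f_eq]
    set c := Real.sqrt π with hcdef
    set I := ∫ s in (0:ℝ)..η, Real.exp (-s^2) with hIdef
    set E := Real.exp (-η^2) with hEdef
    have hI0 : 0 ≤ I := I_nonneg hη
    have hIu : I ≤ η := I_le hη
    have hE0 : 0 < E := Real.exp_pos _
    have hEl : 1 - η^2 ≤ E := by
      have := Real.add_one_le_exp (-η^2); rw [hEdef]; linarith
    set t := c + 2*I with htdef
    have ht : 0 < t := by rw [htdef]; linarith
    have ht1 : c ≤ t := by rw [htdef]; linarith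
    have ht2 : t ≤ c + 2*η := by rw [htdef]; linarith
    clear_value c I E t
    have key : t*t/2 < (E+η*t)*(2*E+η*t) := hgt_core η c E t hη h.le hcl hcu hE0 hEl ht1 ht2
    have heq : (E/t + η) * (2*(E/t) + η) = ((E+η*t)*(2*E+η*t))/(t*t) := by field_simp
    rw [heq, lt_div_iff₀ (by positivity)]
    linarith

lemma hasDerivAt_hfun {x : ℝ} (hx : 0 ≤ x) :
    HasDerivAt hfun ((-2*f x*(f x+x) + 1) * (2*f x + x) + (f x + x) * (2*(-2*f x*(f x+x)) + 1)) x := by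
  have hf := hasDerivAt_f hx
  have h := (hf.add (hasDerivAt_id x)).mul ((hf.const_mul 2).add (hasDerivAt_id x))
  have heq : hfun = fun y => (f y + y) * (2 * f y + y) := rfl
  rw [heq]
  exact h

theorem stmt5 : StrictMonoOn hfun (Set.Ici (0:ℝ)) ∧ ∀ η : ℝ, 0 ≤ η → 1 / 2 < hfun η := by
  constructor
  · apply strictMonoOn_of_deriv_pos (convex_Ici 0)
    · intro x hx
      exact (hasDerivAt_hfun hx).continuousAt.continuousWithinAt
    · intro x hx
      rw [interior_Ici] at hx
      have hx0 : (0:ℝ) ≤ x := le_of_lt hx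
      rw [(hasDerivAt_hfun hx0).deriv]
      have ha := f_pos hx0
      have hk := key_bound hx0
      nlinarith [mul_pos ha hx, mul_pos ha ha, mul_pos (mul_pos ha ha) hx,
        mul_nonneg (mul_nonneg ha.le ha.le) (mul_nonneg ha.le hx0),
        mul_pos ha (mul_pos hx hx), mul_nonneg hx0 hx0]
  · exact fun η hη => hfun_gt hη
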